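/- For detailed balanced reaction networks: if c ∈ ℝ_{>0}^n satisfies κ_{y→y'} c^y = κ_{y'→y} c^{y'} for every reversible reaction pair, then the measure π(x) = c^x / x! on any closed irreducible class Γ ⊂ ℤ_{≥0}^n of the associated stochastic mass-action Markov chain is stationary: for each x ∈ Γ, ∑_{y→y' ∈ R} [π(x - y' + y) λ_{y→y'}(x - y' + y) - π(x) λ_{y→y'}(x)] = 0, where λ_{y→y'}(z) = κ_{y→y'} · z!/(z-y)! · 1_{z ≥ y}. -/

import Mathlib

theorem stmt11 (n : ℕ) {ι : Type} [Fintype ι]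
    (y y' : ι → Fin n → ℕ) (κ : ι → ℝ) (hκ : ∀ e, 0 < κ e)
    (rev : ι → ι) (hrevinv : ∀ e, rev (rev e) = e)
    (hrev1 : ∀ e, y (rev e) = y' e) (hrev2 : ∀ e, y' (rev e) = y e)
    (c : Fin n → ℝ) (hc : ∀ k, 0 < c k)
    (hdb : ∀ e, κ e * ∏ k, c k ^ y e k = κ (rev e) * ∏ k, c k ^ y' e k) :
    ∀ x : Fin n → ℕ,
      ∑ e : ι,
        ((if ∀ k, y' e k ≤ x k then
            (∏ k, c k ^ (x k + y e k - y' e k) / (Nat.factorial (x k + y e k - y' e k) : ℝ)) *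
              (κ e * ∏ k, (Nat.descFactorial (x k + y e k - y' e k) (y e k) : ℝ))
          else 0)
          - (∏ k, c k ^ x k / (Nat.factorial (x k) : ℝ)) *
              (κ e * ∏ k, (Nat.descFactorial (x k) (y e k) : ℝ))) = 0 := by
  intro x
  set g : ι → ℝ := fun e =>
    (∏ k, c k ^ x k / (Nat.factorial (x k) : ℝ)) *
      (κ e * ∏ k, (Nat.descFactorial (x k) (y e k) : ℝ)) with hg
  have hterm : ∀ e : ι,
      (if ∀ k, y' e k ≤ x k then
          (∏ k, c k ^ (x k + y e k - y' e k) / (Nat.factorial (x k + y e k - y' e k) : ℝ)) *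
            (κ e * ∏ k, (Nat.descFactorial (x k + y e k - y' e k) (y e k) : ℝ))
        else 0) = g (rev e) := by
    intro e
    have hgr : g (rev e) =
        (∏ k, c k ^ x k / (Nat.factorial (x k) : ℝ)) *
          (κ (rev e) * ∏ k, (Nat.descFactorial (x k) (y' e k) : ℝ)) := by
      rw [hg]; simp only [hrev1]
    by_cases h : ∀ k, y' e k ≤ x k
    · rw [if_pos h, hgr]
      -- per-component simplification
      have key : ∀ k, c k ^ (x k + y e k - y' e k) /
            (Nat.factorial (x k + y e k - y' e k) : ℝ) *
            (Nat.descFactorial (x k + y e k - y' e k) (y e k) : ℝ)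
          = c k ^ (y e k) * (c k ^ (x k - y' e k) / (Nat.factorial (x k - y' e k) : ℝ)) := by
        intro k
        have hz : x k + y e k - y' e k = (x k - y' e k) + y e k := by
          have := h k; omega
        have hle : y e k ≤ (x k - y' e k) + y e k := Nat.le_add_left _ _
        have hfact : ((((x k - y' e k) + y e k) - y e k).factorial : ℝ) *
            (Nat.descFactorial ((x k - y' e k) + y e k) (y e k) : ℝ)
            = (((x k - y' e k) + y e k).factorial : ℝ) := by
          exact_mod_cast congrArg (Nat.cast (R := ℝ))
            (Nat.factorial_mul_descFactorial hle)
        rw [hz]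
        have h1 : ((((x k - y' e k) + y e k)).factorial : ℝ) ≠ 0 := by
          exact_mod_cast Nat.factorial_ne_zero _
        have h2 : ((x k - y' e k).factorial : ℝ) ≠ 0 := by
          exact_mod_cast Nat.factorial_ne_zero _
        rw [Nat.add_sub_cancel] at hfact
        field_simp
        rw [pow_add, ← hfact]
        ring
      have key2 : ∀ k, c k ^ x k / (Nat.factorial (x k) : ℝ) *
            (Nat.descFactorial (x k) (y' e k) : ℝ)
          = c k ^ (y' e k) * (c k ^ (x k - y' e k) / (Nat.factorial (x k - y' e k) : ℝ)) := by
        intro k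
        have hle := h k
        have hfact : ((x k - y' e k).factorial : ℝ) *
            (Nat.descFactorial (x k) (y' e k) : ℝ) = ((x k).factorial : ℝ) := by
          exact_mod_cast congrArg (Nat.cast (R := ℝ))
            (Nat.factorial_mul_descFactorial hle)
        have h1 : (((x k)).factorial : ℝ) ≠ 0 := by
          exact_mod_cast Nat.factorial_ne_zero _
        have h2 : ((x k - y' e k).factorial : ℝ) ≠ 0 := by
          exact_mod_cast Nat.factorial_ne_zero _
        have hx : x k = (x k - y' e k) + y' e k := by omega
        field_simp
        calc c k ^ x k * (Nat.descFactorial (x k) (y' e k) : ℝ) * (x k - y' e k).factorial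
            = c k ^ ((x k - y' e k) + y' e k) *
              ((x k - y' e k).factorial * (Nat.descFactorial (x k) (y' e k) : ℝ)) := by
              rw [← hx]; ring
          _ = c k ^ y' e k * c k ^ (x k - y' e k) * (x k).factorial := by
              rw [hfact, pow_add]; ring
        ring
      calc (∏ k, c k ^ (x k + y e k - y' e k) / (Nat.factorial (x k + y e k - y' e k) : ℝ)) *
            (κ e * ∏ k, (Nat.descFactorial (x k + y e k - y' e k) (y e k) : ℝ))
          = κ e * ∏ k, (c k ^ (x k + y e k - y' e k) /
              (Nat.factorial (x k + y e k - y' e k) : ℝ) *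
              (Nat.descFactorial (x k + y e k - y' e k) (y e k) : ℝ)) := by
            rw [Finset.prod_mul_distrib]; ring
        _ = κ e * ∏ k, (c k ^ (y e k) *
              (c k ^ (x k - y' e k) / (Nat.factorial (x k - y' e k) : ℝ))) := by
            congr 1; exact Finset.prod_congr rfl fun k _ => key k
        _ = (κ e * ∏ k, c k ^ (y e k)) *
              ∏ k, (c k ^ (x k - y' e k) / (Nat.factorial (x k - y' e k) : ℝ)) := by
            rw [Finset.prod_mul_distrib]; ring
        _ = (κ (rev e) * ∏ k, c k ^ (y' e k)) *
              ∏ k, (c k ^ (x k - y' e k) / (Nat.factorial (x k - y' e k) : ℝ)) := by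
            rw [hdb e]
        _ = κ (rev e) * ∏ k, (c k ^ (y' e k) *
              (c k ^ (x k - y' e k) / (Nat.factorial (x k - y' e k) : ℝ))) := by
            rw [Finset.prod_mul_distrib]; ring
        _ = κ (rev e) * ∏ k, (c k ^ x k / (Nat.factorial (x k) : ℝ) *
              (Nat.descFactorial (x k) (y' e k) : ℝ)) := by
            congr 1; exact Finset.prod_congr rfl fun k _ => (key2 k).symm
        _ = (∏ k, c k ^ x k / (Nat.factorial (x k) : ℝ)) *
              (κ (rev e) * ∏ k, (Nat.descFactorial (x k) (y' e k) : ℝ)) := by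
            rw [Finset.prod_mul_distrib]; ring
    · rw [if_neg h, hgr]
      push_neg at h
      obtain ⟨k0, hk0⟩ := h
      have hz : (Nat.descFactorial (x k0) (y' e k0) : ℝ) = 0 := by
        rw [Nat.descFactorial_of_lt hk0]; simp
      have : (∏ k, (Nat.descFactorial (x k) (y' e k) : ℝ)) = 0 :=
        Finset.prod_eq_zero (Finset.mem_univ k0) hz
      rw [this]
      ring
  have hsum : ∑ e : ι,
      ((if ∀ k, y' e k ≤ x k then
          (∏ k, c k ^ (x k + y e k - y' e k) / (Nat.factorial (x k + y e k - y' e k) : ℝ)) *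
            (κ e * ∏ k, (Nat.descFactorial (x k + y e k - y' e k) (y e k) : ℝ))
        else 0) - g e) = ∑ e : ι, (g (rev e) - g e) :=
    Finset.sum_congr rfl fun e _ => by rw [hterm e]
  rw [hsum, Finset.sum_sub_distrib]
  have hbij : Function.Bijective rev := Function.Involutive.bijective hrevinv
  rw [Fintype.sum_bijective rev hbij (fun e => g (rev e)) g (fun e => rfl)]
  ring
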